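/- In the Pascal triangle graph, the intrinsic metric on level n satisfies ρₙ((n,i),(n,j)) = |i−j|/n for all 0 ≤ i,j ≤ n and n ≥ 1; hence (Γₙ, ρₙ) is isometric to the set {i/n : 0 ≤ i ≤ n} ⊂ [0,1] with the usual metric. -/

import Mathlib

open Finset

/-- A probability distribution on a finite set, given by its weights. -/
def IsProb {X : Type*} [Fintype X] (μ : X → ℝ) : Prop :=
  (∀ x, 0 ≤ μ x) ∧ ∑ x, μ x = 1

/-- A coupling of `μ` and `ν`: nonnegative weights whose first marginal is `μ`
and second marginal is `ν`. -/
def IsCoupling {X : Type*} [Fintype X] (μ ν : X → ℝ) (c : X → X → ℝ) : Prop :=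
  (∀ x y, 0 ≤ c x y) ∧ (∀ x, ∑ y, c x y = μ x) ∧ (∀ y, ∑ x, c x y = ν y)

/-- The Kantorovich (transportation) distance between two probability
distributions on a finite (semi)metric space `(X, d)`. -/
noncomputable def kant {X : Type*} [Fintype X] (d : X → X → ℝ) (μ ν : X → ℝ) : ℝ :=
  sInf { r | ∃ c, IsCoupling μ ν c ∧ r = ∑ x, ∑ y, d x y * c x y }

/-- The Dirac (point mass) distribution at a point. -/
def dirac {X : Type*} [DecidableEq X] (x : X) : X → ℝ := fun y => if y = x then 1 else 0
/-- An `ℕ`-graded graph (Bratteli diagram): one vertex at level `0`, finitely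
many vertices at each level, edges only between adjacent levels, every vertex of
positive level has a predecessor and every vertex has a follower. -/
structure GradedGraph where
  V : ℕ → Type
  fin : ∀ n, Fintype (V n)
  rootNonempty : Nonempty (V 0)
  rootSubsingleton : Subsingleton (V 0)
  adj : ∀ n, V n → V (n + 1) → Prop
  hasPred : ∀ n (v : V (n + 1)), ∃ w, adj n w v
  hasSucc : ∀ n (v : V n), ∃ u, adj n v u

instance (G : GradedGraph) (n : ℕ) : Fintype (G.V n) := G.fin n

/-- The type of paths from the root to a vertex `v` of level `n`. -/
def GradedGraph.PathTo (G : GradedGraph) : ∀ n, G.V n → Type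
  | 0, _ => PUnit
  | n + 1, v => Σ w : G.V n, PLift (G.adj n w v) × G.PathTo n w

/-- The dimension of a vertex: the number of paths from the root to it. -/
noncomputable def GradedGraph.dim (G : GradedGraph) (n : ℕ) (v : G.V n) : ℕ :=
  Nat.card (G.PathTo n v)

open Classical in
/-- The probability measure on the predecessors of a vertex `v ∈ Γ_{n+1}`
induced by `v`: `ν_v(w) = dim w / dim v` for `w ≺ v`. -/
noncomputable def GradedGraph.nu (G : GradedGraph) (n : ℕ) (v : G.V (n + 1)) :
    G.V n → ℝ :=
  fun w => if G.adj n w v then (G.dim n w : ℝ) / (G.dim (n + 1) v : ℝ) else 0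

open Classical in
/-- The intrinsic semimetric on the levels of a graded graph: the discrete
metric on level `1`, and inductively the Kantorovich distance between the
induced predecessor measures, `ρ_{n+1}(u,v) = k_{ρ_n}(ν_u, ν_v)`. -/
noncomputable def GradedGraph.rho (G : GradedGraph) : ∀ n, G.V n → G.V n → ℝ
  | 0, _, _ => 0
  | 1, u, v => if u = v then 0 else 1
  | n + 2, u, v => kant (G.rho (n + 1)) (G.nu (n + 1) u) (G.nu (n + 1) v)

open Classical in
/-- The intrinsic distance between a vertex `w ∈ Γ_n` and a vertex
`u ∈ Γ_{n+1}` of the next level: `ρ(w, u) = k_{ρ_n}(ν_u, δ_w)`. -/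
noncomputable def GradedGraph.rhoCross (G : GradedGraph) (n : ℕ)
    (w : G.V n) (u : G.V (n + 1)) : ℝ :=
  kant (G.rho n) (G.nu n u) (dirac w)

/-- The intrinsic semimetric between vertices of arbitrary levels `m ≤ n`:
the minimum over paths `z = w_m, w_{m+1}, …, w_n = v` of the sum of the
consecutive adjacent-level distances. -/
noncomputable def GradedGraph.vertDist (G : GradedGraph) {m n : ℕ}
    (z : G.V m) (v : G.V n) : ℝ :=
  sInf { r | ∃ c : ∀ i, G.V i, c m = z ∧ c n = v ∧
    (∀ i, m ≤ i → i < n → G.adj i (c i) (c (i + 1))) ∧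
    r = ∑ i ∈ Finset.Ico m n, G.rhoCross i (c i) (c (i + 1)) }

/-- The Pascal triangle graph: level `n` is `{0, 1, …, n}`, and vertex `(n, k)`
is joined to `(n+1, k)` and `(n+1, k+1)`. -/
def pascal : GradedGraph where
  V n := Fin (n + 1)
  fin _ := inferInstance
  rootNonempty := ⟨0⟩
  rootSubsingleton := ⟨fun a b => Fin.ext (by omega)⟩
  adj _ w v := (v : ℕ) = (w : ℕ) ∨ (v : ℕ) = (w : ℕ) + 1
  hasPred := by
    intro n v
    by_cases h : (v : ℕ) ≤ n
    · exact ⟨⟨(v : ℕ), by omega⟩, Or.inl rfl⟩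
    · refine ⟨⟨n, Nat.lt_succ_self n⟩, Or.inr ?_⟩
      have hv := v.isLt
      show (v : ℕ) = n + 1
      omega
  hasSucc := by
    intro n v
    exact ⟨⟨(v : ℕ), by omega⟩, Or.inl rfl⟩

/-- The vertex `(n, k)` of the Pascal graph. -/
def pvert (n k : ℕ) (h : k ≤ n) : pascal.V n := ⟨k, Nat.lt_succ_of_le h⟩

instance decAdj (n : ℕ) (w : pascal.V n) (v : pascal.V (n+1)) : Decidable (pascal.adj n w v) :=
  inferInstanceAs (Decidable (_ ∨ _))

noncomputable instance pathFin : ∀ (n : ℕ) (v : pascal.V n), Fintype (pascal.PathTo n v)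
  | 0, _ => inferInstanceAs (Fintype PUnit)
  | (n+1), v =>
      have : ∀ w, Fintype (pascal.PathTo n w) := fun w => pathFin n w
      inferInstanceAs (Fintype (Σ w : pascal.V n, PLift (pascal.adj n w v) × pascal.PathTo n w))

lemma dim_succ (n : ℕ) (v : pascal.V (n+1)) :
    pascal.dim (n+1) v = ∑ w : pascal.V n, if pascal.adj n w v then pascal.dim n w else 0 := by
  show Nat.card (Σ w : pascal.V n, PLift (pascal.adj n w v) × pascal.PathTo n w) = _
  rw [Nat.card_eq_fintype_card, Fintype.card_sigma]
  refine Finset.sum_congr rfl fun w _ => ?_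
  rw [Fintype.card_prod]
  by_cases h : pascal.adj n w v
  · have : Fintype.card (PLift (pascal.adj n w v)) = 1 := by
      exact Fintype.card_eq_one_iff.2 ⟨⟨h⟩, fun b => rfl⟩
    rw [this, one_mul, if_pos h, GradedGraph.dim, Nat.card_eq_fintype_card]
  · rw [if_neg h, Fintype.card_eq_zero_iff.2 ⟨fun p => h p.down⟩, zero_mul]

lemma dim_zero (v : pascal.V 0) : pascal.dim 0 v = 1 := by
  show Nat.card PUnit = 1
  simp

/-- Coordinate of a Pascal vertex. -/
def pco {n : ℕ} (v : pascal.V n) : ℕ := Fin.val v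

lemma pco_lt {n : ℕ} (v : pascal.V n) : pco v < n + 1 := v.isLt

lemma pco_pvert (n k : ℕ) (h : k ≤ n) : pco (pvert n k h) = k := rfl

lemma pvert_pco {n : ℕ} (v : pascal.V n) : pvert n (pco v) (by have := pco_lt v; omega) = v :=
  Fin.ext rfl

lemma pco_inj {n : ℕ} {v w : pascal.V n} (h : pco v = pco w) : v = w := Fin.ext h

instance pascalDecEq (n : ℕ) : DecidableEq (pascal.V n) := fun a b =>
  decidable_of_iff (pco a = pco b) ⟨pco_inj, fun h => by rw [h]⟩

lemma adj_iff (n : ℕ) (w : pascal.V n) (v : pascal.V (n+1)) :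
    pascal.adj n w v ↔ (pco v = pco w ∨ pco v = pco w + 1) := Iff.rfl

/-- Key sum helper: sums over level `m` of functions supported on predecessors of `(m+1,i)`. -/
lemma sum_adj {M : Type*} [AddCommMonoid M] (m i : ℕ) (g : ℕ → M) :
    (∑ w : pascal.V m, if (i = pco w ∨ i = pco w + 1) then g (pco w) else 0)
      = (if i ≤ m then g i else 0) + (if 1 ≤ i ∧ i ≤ m + 1 then g (i-1) else 0) := by
  have split : ∀ w : pascal.V m,
      (if (i = pco w ∨ i = pco w + 1) then g (pco w) else 0)
        = (if i = pco w then g (pco w) else 0) + (if i = pco w + 1 then g (pco w) else 0) := by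
    intro w
    by_cases h1 : i = pco w <;> by_cases h2 : i = pco w + 1 <;> simp [h1, h2] <;> omega
  rw [Finset.sum_congr rfl (fun w _ => split w), Finset.sum_add_distrib]
  congr 1
  · by_cases h : i ≤ m
    · rw [if_pos h]
      have : ∀ w : pascal.V m, (if i = pco w then g (pco w) else 0)
          = (if w = pvert m i h then g i else 0) := by
        intro w
        by_cases hw : i = pco w
        · rw [if_pos hw, if_pos (pco_inj (v := w) (w := pvert m i h) (by rw [pco_pvert]; omega)), hw]
        · rw [if_neg hw, if_neg (fun hc => hw (by rw [hc]; rfl))]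
      rw [Finset.sum_congr rfl (fun w _ => this w), Finset.sum_ite_eq' Finset.univ,
        if_pos (Finset.mem_univ _)]
    · rw [if_neg h]
      refine Finset.sum_eq_zero fun w _ => if_neg fun hc => h (by have := pco_lt w; omega)
  · by_cases h : 1 ≤ i ∧ i ≤ m + 1
    · rw [if_pos h]
      have : ∀ w : pascal.V m, (if i = pco w + 1 then g (pco w) else 0)
          = (if w = pvert m (i-1) (by omega) then g (i-1) else 0) := by
        intro w
        by_cases hw : i = pco w + 1
        · rw [if_pos hw, if_pos (pco_inj (show pco w = pco (pvert m (i-1) (by omega)) by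
            rw [pco_pvert]; omega))]
          congr 1; omega
        · rw [if_neg hw, if_neg (fun hc => hw (by rw [hc, pco_pvert]; omega))]
      rw [Finset.sum_congr rfl (fun w _ => this w), Finset.sum_ite_eq' Finset.univ,
        if_pos (Finset.mem_univ _)]
    · rw [if_neg h]
      refine Finset.sum_eq_zero fun w _ => if_neg fun hc => h (by have := pco_lt w; omega)

lemma dim_eq_choose : ∀ (n : ℕ) (v : pascal.V n), pascal.dim n v = n.choose (pco v) := by
  intro n
  induction n with
  | zero => intro v
            have h0 : pco v = 0 := by have := pco_lt v; omega
            rw [dim_zero, h0]; rfl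
  | succ n ih =>
    intro v
    rw [dim_succ]
    have : ∀ w : pascal.V n, (if pascal.adj n w v then pascal.dim n w else 0)
        = (if (pco v = pco w ∨ pco v = pco w + 1) then n.choose (pco w) else 0) := by
      intro w
      by_cases h : pascal.adj n w v
      · rw [if_pos h, if_pos ((adj_iff n w v).1 h), ih]
      · rw [if_neg h, if_neg (fun hc => h ((adj_iff n w v).2 hc))]
    rw [Finset.sum_congr rfl (fun w _ => this w), sum_adj n (pco v) (fun t => n.choose t)]
    have hv := pco_lt v
    by_cases h0 : pco v = 0
    · rw [h0]; simp
    by_cases hn : pco v = n + 1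
    · rw [hn]; rw [if_neg (by omega), if_pos (by omega)]
      simp [Nat.choose_self]
    · rw [if_pos (by omega), if_pos (by omega)]
      have hvv : pco v = ((pco v) - 1) + 1 := by omega
      have key : (n+1).choose (pco v) = n.choose (pco v - 1) + n.choose (pco v) := by
        conv_lhs => rw [hvv]
        rw [Nat.choose_succ_succ]
        have h2 : (pco v - 1).succ = pco v := by omega
        rw [h2]
      rw [key]; omega

lemma nu_eq (m : ℕ) (u : pascal.V (m+1)) (w : pascal.V m) :
    pascal.nu m u w = if (pco u = pco w ∨ pco u = pco w + 1)
      then (m.choose (pco w) : ℝ) / (((m+1).choose (pco u) : ℕ) : ℝ) else 0 := by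
  rw [GradedGraph.nu]
  by_cases h : pascal.adj m w u
  · rw [if_pos h, if_pos ((adj_iff m w u).1 h), dim_eq_choose, dim_eq_choose]
  · rw [if_neg h, if_neg (fun hc => h ((adj_iff m w u).2 hc))]

lemma nu_nonneg (m : ℕ) (u : pascal.V (m+1)) (w : pascal.V m) : 0 ≤ pascal.nu m u w := by
  rw [nu_eq]
  by_cases h : (pco u = pco w ∨ pco u = pco w + 1)
  · rw [if_pos h]; positivity
  · rw [if_neg h]

lemma choose_pos' (m : ℕ) (u : pascal.V (m+1)) : (0:ℝ) < (((m+1).choose (pco u) : ℕ) : ℝ) := by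
  have := Nat.choose_pos (show pco u ≤ m + 1 by have := pco_lt u; omega)
  exact_mod_cast this

lemma nu_sum (m : ℕ) (u : pascal.V (m+1)) : ∑ w : pascal.V m, pascal.nu m u w = 1 := by
  have hC := choose_pos' m u
  calc ∑ w : pascal.V m, pascal.nu m u w
      = ∑ w : pascal.V m, if (pco u = pco w ∨ pco u = pco w + 1)
          then ((m.choose (pco w) : ℕ) : ℝ) / (((m+1).choose (pco u) : ℕ) : ℝ) else 0 :=
        Finset.sum_congr rfl fun w _ => nu_eq m u w
    _ = _ := by
        rw [sum_adj m (pco u) (fun t => ((m.choose t : ℕ) : ℝ) / (((m+1).choose (pco u) : ℕ) : ℝ))]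
        have hu := pco_lt u
        by_cases h0 : pco u = 0
        · rw [h0, if_pos (by omega), if_neg (by omega)]
          simp
        by_cases hn : pco u = m + 1
        · rw [if_neg (by omega), if_pos (by omega), hn]
          simp [Nat.choose_self]
        · rw [if_pos (by omega), if_pos (by omega)]
          have hp : (m+1).choose (pco u) = m.choose (pco u - 1) + m.choose (pco u) := by
            have hvv : pco u = ((pco u) - 1) + 1 := by omega
            conv_lhs => rw [hvv]
            rw [Nat.choose_succ_succ]
            have h2 : (pco u - 1).succ = pco u := by omega
            rw [h2]
          have hpr : (((m+1).choose (pco u) : ℕ) : ℝ)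
              = (m.choose (pco u - 1) : ℝ) + (m.choose (pco u) : ℝ) := by
            rw [hp]; push_cast; ring
          field_simp
          rw [hpr]; ring

lemma nu_mean (m : ℕ) (u : pascal.V (m+1)) :
    ∑ w : pascal.V m, (pco w : ℝ) * pascal.nu m u w
      = (pco u : ℝ) * m / (m+1) := by
  have hC := choose_pos' m u
  calc ∑ w : pascal.V m, (pco w : ℝ) * pascal.nu m u w
      = ∑ w : pascal.V m, if (pco u = pco w ∨ pco u = pco w + 1)
          then (pco w : ℝ) * (((m.choose (pco w) : ℕ) : ℝ) / (((m+1).choose (pco u) : ℕ) : ℝ))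
          else 0 := by
        refine Finset.sum_congr rfl fun w _ => ?_
        rw [nu_eq]
        by_cases h : (pco u = pco w ∨ pco u = pco w + 1)
        · rw [if_pos h, if_pos h]
        · rw [if_neg h, if_neg h, mul_zero]
    _ = _ := by
        rw [sum_adj m (pco u)
          (fun t => (t : ℝ) * (((m.choose t : ℕ) : ℝ) / (((m+1).choose (pco u) : ℕ) : ℝ)))]
        have hu := pco_lt u
        by_cases h0 : pco u = 0
        · rw [h0, if_pos (by omega), if_neg (by omega)]
          simp
        by_cases hn : pco u = m + 1
        · rw [if_neg (by omega), if_pos (by omega), hn]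
          have h1 : m + 1 - 1 = m := by omega
          rw [h1]
          simp [Nat.choose_self]
          push_cast
          field_simp
        · rw [if_pos (by omega), if_pos (by omega)]
          -- key identities
          have hvv : pco u = ((pco u) - 1) + 1 := by omega
          have hp : (m+1).choose (pco u) = m.choose (pco u - 1) + m.choose (pco u) := by
            conv_lhs => rw [hvv]
            rw [Nat.choose_succ_succ]
            have h2 : (pco u - 1).succ = pco u := by omega
            rw [h2]
          have hs : (m+1) * m.choose (pco u - 1) = (m+1).choose (pco u) * pco u := by
            have h3 := Nat.add_one_mul_choose_eq m (pco u - 1)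
            have h2 : (pco u - 1).succ = pco u := by omega
            rw [← hvv] at h3
            exact h3
          have hsr : ((m:ℝ)+1) * (m.choose (pco u - 1) : ℝ)
              = (((m+1).choose (pco u) : ℕ) : ℝ) * (pco u : ℝ) := by exact_mod_cast hs
          have hpr : (((m+1).choose (pco u) : ℕ) : ℝ)
              = (m.choose (pco u - 1) : ℝ) + (m.choose (pco u) : ℝ) := by
            rw [hp]; push_cast; ring
          have hk1 : ((pco u - 1 : ℕ) : ℝ) = (pco u : ℝ) - 1 := by
            push_cast [Nat.cast_sub (show 1 ≤ pco u by omega)]; ring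
          rw [hk1]
          have hab : (((m+1).choose (pco u) : ℕ) : ℝ) ≠ 0 := ne_of_gt hC
          have hm1 : (m:ℝ) + 1 ≠ 0 := by positivity
          rw [← mul_div_assoc, ← mul_div_assoc, ← add_div,
            div_eq_div_iff hab hm1]
          linear_combination (-1 : ℝ) * hsr - ((pco u : ℝ)*((m:ℝ)+1)) * hpr

section KantGeneric

variable {X : Type*} [Fintype X]

lemma isCoupling_prod (μ ν : X → ℝ) (hμ0 : ∀ x, 0 ≤ μ x) (hμ1 : ∑ x, μ x = 1)
    (hν0 : ∀ x, 0 ≤ ν x) (hν1 : ∑ x, ν x = 1) :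
    IsCoupling μ ν (fun x y => μ x * ν y) := by
  refine ⟨fun x y => mul_nonneg (hμ0 x) (hν0 y), fun x => ?_, fun y => ?_⟩
  · rw [← Finset.mul_sum, hν1, mul_one]
  · simp_rw [← Finset.sum_mul, hμ1, one_mul]

lemma coupling_cost_ge (d : X → X → ℝ) (g : X → ℝ) (hd : ∀ x y, g x - g y ≤ d x y)
    (μ ν : X → ℝ) (c : X → X → ℝ) (hc : IsCoupling μ ν c) :
    (∑ x, g x * μ x) - (∑ y, g y * ν y) ≤ ∑ x, ∑ y, d x y * c x y := by
  obtain ⟨hc0, hc1, hc2⟩ := hc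
  have step : ∑ x, ∑ y, (g x - g y) * c x y ≤ ∑ x, ∑ y, d x y * c x y := by
    refine Finset.sum_le_sum fun x _ => Finset.sum_le_sum fun y _ =>
      mul_le_mul_of_nonneg_right (hd x y) (hc0 x y)
  refine le_trans (le_of_eq ?_) step
  have : ∀ x, ∑ y, (g x - g y) * c x y = g x * μ x - ∑ y, g y * c x y := by
    intro x
    rw [← hc1 x, Finset.mul_sum, ← Finset.sum_sub_distrib]
    exact Finset.sum_congr rfl fun y _ => by ring
  rw [Finset.sum_congr rfl fun x _ => this x, Finset.sum_sub_distrib]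
  congr 1
  rw [Finset.sum_comm]
  exact Finset.sum_congr rfl fun y _ => by rw [← hc2 y, Finset.mul_sum]

lemma coupling_cost_nonneg (d : X → X → ℝ) (hd : ∀ x y, 0 ≤ d x y)
    (c : X → X → ℝ) (hc0 : ∀ x y, 0 ≤ c x y) :
    (0:ℝ) ≤ ∑ x, ∑ y, d x y * c x y :=
  Finset.sum_nonneg fun x _ => Finset.sum_nonneg fun y _ => mul_nonneg (hd x y) (hc0 x y)

lemma kant_le_cost (d : X → X → ℝ) (hd : ∀ x y, 0 ≤ d x y) (μ ν : X → ℝ)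
    (c : X → X → ℝ) (hc : IsCoupling μ ν c) :
    kant d μ ν ≤ ∑ x, ∑ y, d x y * c x y := by
  refine csInf_le ⟨0, ?_⟩ ⟨c, hc, rfl⟩
  rintro r ⟨c', hc', rfl⟩
  exact coupling_cost_nonneg d hd c' hc'.1

lemma le_kant (d : X → X → ℝ) (μ ν : X → ℝ) (b : ℝ)
    (hne : ∃ c, IsCoupling μ ν c)
    (hb : ∀ c, IsCoupling μ ν c → b ≤ ∑ x, ∑ y, d x y * c x y) :
    b ≤ kant d μ ν := by
  obtain ⟨c, hc⟩ := hne
  refine le_csInf ⟨_, c, hc, rfl⟩ ?_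
  rintro r ⟨c', hc', rfl⟩
  exact hb c' hc'

lemma kant_comm (d : X → X → ℝ) (hd : ∀ x y, d x y = d y x) (μ ν : X → ℝ) :
    kant d μ ν = kant d ν μ := by
  have key : ∀ μ ν : X → ℝ, {r : ℝ | ∃ c, IsCoupling μ ν c ∧ r = ∑ x, ∑ y, d x y * c x y}
      ⊆ {r : ℝ | ∃ c, IsCoupling ν μ c ∧ r = ∑ x, ∑ y, d x y * c x y} := by
    rintro μ ν r ⟨c, ⟨hc0, hc1, hc2⟩, rfl⟩
    refine ⟨fun x y => c y x, ⟨fun x y => hc0 y x, fun x => hc2 x, fun y => hc1 y⟩, ?_⟩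
    rw [Finset.sum_comm]
    exact Finset.sum_congr rfl fun y _ => Finset.sum_congr rfl fun x _ => by rw [hd y x]
  unfold kant
  rw [Set.Subset.antisymm (key μ ν) (key ν μ)]

end KantGeneric

lemma nu_support {m : ℕ} {u : pascal.V (m+1)} {w : pascal.V m} (h : pascal.nu m u w ≠ 0) :
    pco w ≤ pco u ∧ pco u ≤ pco w + 1 := by
  rw [nu_eq] at h
  by_cases hc : (pco u = pco w ∨ pco u = pco w + 1)
  · omega
  · rw [if_neg hc] at h; exact absurd rfl h

lemma rho_level : ∀ (n : ℕ) (u v : pascal.V (n+1)),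
    pascal.rho (n+1) u v = |(pco u : ℝ) - (pco v : ℝ)| / ((n:ℝ)+1) := by
  intro n
  induction n with
  | zero =>
    intro u v
    have hu := pco_lt u; have hv := pco_lt v
    by_cases h : u = v
    · simp [GradedGraph.rho, h]
    · have h1 : pco u ≠ pco v := fun hc => h (pco_inj hc)
      have h2 : |(pco u : ℝ) - (pco v : ℝ)| = 1 := by
        have : pco u = 0 ∧ pco v = 1 ∨ pco u = 1 ∧ pco v = 0 := by omega
        rcases this with ⟨h2, h3⟩ | ⟨h2, h3⟩ <;> rw [h2, h3] <;> norm_num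
      simp [GradedGraph.rho, h, h2]
  | succ n ih =>
    intro u0 v0
    have hrho : ∀ u v : pascal.V (n+1+1), pascal.rho (n+1+1) u v
        = kant (pascal.rho (n+1)) (pascal.nu (n+1) u) (pascal.nu (n+1) v) := fun _ _ => rfl
    have hd0 : ∀ x y : pascal.V (n+1), 0 ≤ pascal.rho (n+1) x y := by
      intro x y; rw [ih]; positivity
    have hdsymm : ∀ x y : pascal.V (n+1), pascal.rho (n+1) x y = pascal.rho (n+1) y x := by
      intro x y; rw [ih, ih, abs_sub_comm]
    have hmean : ∀ w : pascal.V (n+1+1),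
        ∑ x : pascal.V (n+1), ((pco x : ℝ) / ((n:ℝ)+1)) * pascal.nu (n+1) w x
          = (pco w : ℝ) / ((n:ℝ)+2) := by
      intro w
      have h1 : ∑ x : pascal.V (n+1), ((pco x : ℝ) / ((n:ℝ)+1)) * pascal.nu (n+1) w x
          = (∑ x : pascal.V (n+1), (pco x : ℝ) * pascal.nu (n+1) w x) / ((n:ℝ)+1) := by
        rw [Finset.sum_div]
        exact Finset.sum_congr rfl fun x _ => by ring
      rw [h1, nu_mean (n+1) w]
      have hn1 : ((n:ℝ)+1) ≠ 0 := by positivity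
      have hn2 : ((n:ℝ)+2) ≠ 0 := by positivity
      push_cast
      field_simp
      ring
    have key : ∀ u v : pascal.V (n+1+1), pco u ≤ pco v →
        kant (pascal.rho (n+1)) (pascal.nu (n+1) u) (pascal.nu (n+1) v)
          = ((pco v : ℝ) - (pco u : ℝ)) / ((n:ℝ)+2) := by
      intro u v huv
      have hprod : IsCoupling (pascal.nu (n+1) u) (pascal.nu (n+1) v)
          (fun x y => pascal.nu (n+1) u x * pascal.nu (n+1) v y) :=
        isCoupling_prod _ _ (nu_nonneg (n+1) u) (nu_sum (n+1) u)
          (nu_nonneg (n+1) v) (nu_sum (n+1) v)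
      -- lower bound
      have hlow : ((pco v : ℝ) - (pco u : ℝ)) / ((n:ℝ)+2)
          ≤ kant (pascal.rho (n+1)) (pascal.nu (n+1) u) (pascal.nu (n+1) v) := by
        refine le_kant _ _ _ _ ⟨_, hprod⟩ fun c hc => ?_
        have hg : ∀ x y : pascal.V (n+1),
            (fun z => -((pco z : ℝ) / ((n:ℝ)+1))) x - (fun z => -((pco z : ℝ) / ((n:ℝ)+1))) y
              ≤ pascal.rho (n+1) x y := by
          intro x y
          show -((pco x : ℝ) / ((n:ℝ)+1)) - (-((pco y : ℝ) / ((n:ℝ)+1))) ≤ _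
          rw [ih x y]
          have h1 : (pco y : ℝ) - (pco x : ℝ) ≤ |(pco x : ℝ) - (pco y : ℝ)| := by
            rw [abs_sub_comm]; exact le_abs_self _
          have h3 : -((pco x : ℝ) / ((n:ℝ)+1)) - (-((pco y : ℝ) / ((n:ℝ)+1)))
              = ((pco y : ℝ) - (pco x : ℝ)) / ((n:ℝ)+1) := by ring
          rw [h3]
          gcongr
        have hcg := coupling_cost_ge (pascal.rho (n+1))
          (fun z => -((pco z : ℝ) / ((n:ℝ)+1))) hg _ _ c hc
        have e1 : ∑ x : pascal.V (n+1),
            (fun z => -((pco z : ℝ) / ((n:ℝ)+1))) x * pascal.nu (n+1) u x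
            = -((pco u : ℝ) / ((n:ℝ)+2)) := by
          rw [← hmean u, ← Finset.sum_neg_distrib]
          exact Finset.sum_congr rfl fun x _ => by ring
        have e2 : ∑ x : pascal.V (n+1),
            (fun z => -((pco z : ℝ) / ((n:ℝ)+1))) x * pascal.nu (n+1) v x
            = -((pco v : ℝ) / ((n:ℝ)+2)) := by
          rw [← hmean v, ← Finset.sum_neg_distrib]
          exact Finset.sum_congr rfl fun x _ => by ring
        rw [e1, e2] at hcg
        calc ((pco v : ℝ) - (pco u : ℝ)) / ((n:ℝ)+2)
            = -((pco u : ℝ) / ((n:ℝ)+2)) - (-((pco v : ℝ) / ((n:ℝ)+2))) := by ring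
          _ ≤ _ := hcg
      rcases eq_or_lt_of_le huv with heq | hlt
      · -- equal coordinates: u = v, diagonal coupling has cost 0
        have huv' : u = v := pco_inj heq
        subst huv'
        have hdiag : IsCoupling (pascal.nu (n+1) u) (pascal.nu (n+1) u)
            (fun x y => if x = y then pascal.nu (n+1) u x else 0) := by
          refine ⟨fun x y => ?_, fun x => ?_, fun y => ?_⟩
          · by_cases h : x = y <;> simp [h, nu_nonneg]
          · simp
          · simp
        have hcost : ∑ x : pascal.V (n+1), ∑ y : pascal.V (n+1),
            pascal.rho (n+1) x y * (if x = y then pascal.nu (n+1) u x else 0) = 0 := by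
          refine Finset.sum_eq_zero fun x _ => Finset.sum_eq_zero fun y _ => ?_
          by_cases h : x = y
          · subst h
            rw [ih]
            simp
          · simp [h]
        have hup := kant_le_cost (pascal.rho (n+1)) hd0 _ _ _ hdiag
        rw [hcost] at hup
        rw [heq] at hlow ⊢
        have hz : ((pco u : ℝ) - (pco u : ℝ)) / ((n:ℝ)+2) = 0 := by ring
        rw [heq] at hz
        linarith
      · -- strictly increasing: product coupling achieves the bound
        have hcost : ∑ x : pascal.V (n+1), ∑ y : pascal.V (n+1),
            pascal.rho (n+1) x y * (pascal.nu (n+1) u x * pascal.nu (n+1) v y)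
            = ((pco v : ℝ) - (pco u : ℝ)) / ((n:ℝ)+2) := by
          have hpt : ∀ x y : pascal.V (n+1),
              pascal.rho (n+1) x y * (pascal.nu (n+1) u x * pascal.nu (n+1) v y)
              = ((pco y : ℝ) / ((n:ℝ)+1) - (pco x : ℝ) / ((n:ℝ)+1))
                  * (pascal.nu (n+1) u x * pascal.nu (n+1) v y) := by
            intro x y
            by_cases hz : pascal.nu (n+1) u x * pascal.nu (n+1) v y = 0
            · rw [hz, mul_zero, mul_zero]
            · have hx : pascal.nu (n+1) u x ≠ 0 := fun h => hz (by rw [h, zero_mul])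
              have hy : pascal.nu (n+1) v y ≠ 0 := fun h => hz (by rw [h, mul_zero])
              have h1 := nu_support hx
              have h2 := nu_support hy
              have hxy : pco x ≤ pco y := by omega
              rw [ih]
              congr 1
              rw [abs_sub_comm, abs_of_nonneg (by
                have : (pco x : ℝ) ≤ (pco y : ℝ) := by exact_mod_cast hxy
                linarith)]
              ring
          rw [Finset.sum_congr rfl fun x _ => Finset.sum_congr rfl fun y _ => hpt x y]
          have expand : ∀ x : pascal.V (n+1), ∑ y : pascal.V (n+1),
              ((pco y : ℝ) / ((n:ℝ)+1) - (pco x : ℝ) / ((n:ℝ)+1))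
                * (pascal.nu (n+1) u x * pascal.nu (n+1) v y)
              = pascal.nu (n+1) u x * ((pco v : ℝ) / ((n:ℝ)+2))
                - (pco x : ℝ) / ((n:ℝ)+1) * pascal.nu (n+1) u x := by
            intro x
            have step : ∀ y : pascal.V (n+1),
                ((pco y : ℝ) / ((n:ℝ)+1) - (pco x : ℝ) / ((n:ℝ)+1))
                  * (pascal.nu (n+1) u x * pascal.nu (n+1) v y)
                = pascal.nu (n+1) u x * ((pco y : ℝ) / ((n:ℝ)+1) * pascal.nu (n+1) v y)
                  - (pco x : ℝ) / ((n:ℝ)+1) * pascal.nu (n+1) u x * pascal.nu (n+1) v y := by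
              intro y; ring
            rw [Finset.sum_congr rfl fun y _ => step y, Finset.sum_sub_distrib,
              ← Finset.mul_sum, hmean v, ← Finset.mul_sum, nu_sum (n+1) v, mul_one]
          rw [Finset.sum_congr rfl fun x _ => expand x, Finset.sum_sub_distrib,
            ← Finset.sum_mul, nu_sum (n+1) u, one_mul, hmean u]
          ring
        have hup := kant_le_cost (pascal.rho (n+1)) hd0 _ _ _ hprod
        rw [hcost] at hup
        linarith
    rw [hrho u0 v0]
    have hcast : ((n+1:ℕ):ℝ) + 1 = (n:ℝ) + 2 := by push_cast; ring
    rw [hcast]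
    rcases le_total (pco u0) (pco v0) with h | h
    · rw [key u0 v0 h, abs_sub_comm, abs_of_nonneg (by
        have : (pco u0 : ℝ) ≤ (pco v0 : ℝ) := by exact_mod_cast h
        linarith)]
    · rw [kant_comm _ hdsymm, key v0 u0 h, abs_of_nonneg (by
        have : (pco v0 : ℝ) ≤ (pco u0 : ℝ) := by exact_mod_cast h
        linarith)]

/-- in the Pascal triangle graph, the intrinsic metric on level
`n ≥ 1` is `ρ_n((n,i),(n,j)) = |i-j|/n`; in other words, `(Γ_n, ρ_n)` is
isometric to `{i/n : 0 ≤ i ≤ n} ⊆ [0,1]` with the usual metric. -/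
theorem pascal_rho_level (n : ℕ) (hn : 1 ≤ n) (i j : ℕ) (hi : i ≤ n) (hj : j ≤ n) :
    pascal.rho n (pvert n i hi) (pvert n j hj) = |(i : ℝ) - (j : ℝ)| / (n : ℝ) := by
  obtain ⟨m, rfl⟩ : ∃ m, n = m + 1 := ⟨n - 1, by omega⟩
  rw [rho_level m (pvert (m+1) i hi) (pvert (m+1) j hj), pco_pvert, pco_pvert]
  push_cast
  ring
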